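/- Let ρ and θ be two nontrivial equivalence relations on E_k which are incomparable (neither is contained in the other). If ρ ∩ θ = Δ and ρ ∘ θ ≠ E_k², then setting σ = (ρ ∘ θ) ∩ (θ ∘ ρ), one has Pol(θ) ∩ Pol(ρ) ⊊ Pol(θ) ∩ Pol(σ) ⊊ Pol(θ). -/

import Mathlib

/-- A finitary operation on `Fin k`: a pair of an arity `n` and a function
`(Fin n → Fin k) → Fin k`. -/
abbrev Ops (k : ℕ) := Σ n : ℕ, ((Fin n → Fin k) → Fin k)

/-- The set of finitary operations preserving a binary relation `θ` on `Fin k`. -/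
def PolB {k : ℕ} (θ : Set (Fin k × Fin k)) : Set (Ops k) :=
  {f | ∀ a b : Fin f.1 → Fin k, (∀ i, (a i, b i) ∈ θ) → (f.2 a, f.2 b) ∈ θ}

/-- The set of finitary operations preserving an `h`-ary relation `ρ` on `Fin k`. -/
def PolH {k h : ℕ} (ρ : Set (Fin h → Fin k)) : Set (Ops k) :=
  {f | ∀ M : Fin h → Fin f.1 → Fin k,
    (∀ i, (fun j => M j i) ∈ ρ) → (fun j => f.2 (M j)) ∈ ρ}

/-- A clone: contains all projections and is closed under composition. -/
def IsClone {k : ℕ} (C : Set (Ops k)) : Prop :=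
  (∀ (n : ℕ) (i : Fin n), (⟨n, fun x => x i⟩ : Ops k) ∈ C) ∧
  (∀ (n m : ℕ) (f : (Fin n → Fin k) → Fin k) (g : Fin n → (Fin m → Fin k) → Fin k),
    (⟨n, f⟩ : Ops k) ∈ C → (∀ i, (⟨m, g i⟩ : Ops k) ∈ C) →
    (⟨m, fun x => f fun i => g i x⟩ : Ops k) ∈ C)

/-- `C` is maximal in `D`: `C ⊊ D` and no clone lies strictly between them. -/
def MaximalIn {k : ℕ} (C D : Set (Ops k)) : Prop :=
  C ⊂ D ∧ ∀ F : Set (Ops k), IsClone F → ¬(C ⊂ F ∧ F ⊂ D)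

/-- `θ` is an equivalence relation (as a set of pairs). -/
def IsEquivRel {A : Type*} (θ : Set (A × A)) : Prop :=
  (∀ a, (a, a) ∈ θ) ∧ (∀ a b, (a, b) ∈ θ → (b, a) ∈ θ) ∧
    (∀ a b c, (a, b) ∈ θ → (b, c) ∈ θ → (a, c) ∈ θ)

/-- The diagonal relation `Δ` on `Fin k`. -/
def diag (k : ℕ) : Set (Fin k × Fin k) := {p | p.1 = p.2}

/-- A nontrivial equivalence relation: `Δ ⊊ θ ⊊ (Fin k)²`. -/
def NontrivEquiv {k : ℕ} (θ : Set (Fin k × Fin k)) : Prop :=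
  IsEquivRel θ ∧ diag k ⊂ θ ∧ θ ⊂ Set.univ

/-- Relational composition `α ∘ β = {(a,c) : ∃ b, (a,b) ∈ α ∧ (b,c) ∈ β}`. -/
def relComp {k : ℕ} (α β : Set (Fin k × Fin k)) : Set (Fin k × Fin k) :=
  {p | ∃ b, (p.1, b) ∈ α ∧ (b, p.2) ∈ β}

/-- The set of equivalence classes of `θ`. -/
def classesOf {A : Type*} (θ : Set (A × A)) : Set (Set A) :=
  {S | ∃ a : A, S = {b | (a, b) ∈ θ}}

/-- Totally reflexive: every tuple with a repeated entry is in `ρ`. -/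
def TotallyReflexive {k h : ℕ} (ρ : Set (Fin h → Fin k)) : Prop :=
  ∀ v : Fin h → Fin k, (∃ i j : Fin h, i ≠ j ∧ v i = v j) → v ∈ ρ

/-- Totally symmetric: closed under all permutations of coordinates. -/
def TotallySymmetric {k h : ℕ} (ρ : Set (Fin h → Fin k)) : Prop :=
  ∀ (v : Fin h → Fin k) (σ : Equiv.Perm (Fin h)), v ∈ ρ → v ∘ ⇑σ ∈ ρ

/-- The center of an `h`-ary relation: elements `a` such that every tuple whose
first coordinate is `a` lies in `ρ`. -/
def center {k h : ℕ} (ρ : Set (Fin h → Fin k)) : Set (Fin k) :=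
  {a | ∀ v : Fin h → Fin k, (∀ i : Fin h, (i : ℕ) = 0 → v i = a) → v ∈ ρ}

/-- An `h`-ary central relation. -/
def IsCentralRel {k h : ℕ} (ρ : Set (Fin h → Fin k)) : Prop :=
  ρ ≠ Set.univ ∧ TotallyReflexive ρ ∧ TotallySymmetric ρ ∧ (center ρ).Nonempty

/-- `η = {(u₁,…,u_h) : (u₁,u₂) ∈ θ}` (0-indexed: first two coordinates θ-related). -/
def eta {k : ℕ} (h : ℕ) (θ : Set (Fin k × Fin k)) : Set (Fin h → Fin k) :=
  {v | ∀ i j : Fin h, (i : ℕ) = 0 → (j : ℕ) = 1 → (v i, v j) ∈ θ}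

/-- `ρ_{l,θ}`: tuples whose coordinates from position `l` onwards can be moved
inside their θ-classes so as to land in `ρ` (0-indexed coordinates). -/
def rhoTh {k h : ℕ} (l : ℕ) (θ : Set (Fin k × Fin k)) (ρ : Set (Fin h → Fin k)) :
    Set (Fin h → Fin k) :=
  {a | ∃ u : Fin h → Fin k, (∀ j : Fin h, l ≤ (j : ℕ) → (u j, a j) ∈ θ) ∧
    (fun j : Fin h => if (j : ℕ) < l then a j else u j) ∈ ρ}

/-- `ρ` is θ-closed: `ρ = ρ_{0,θ}`. -/
def ThetaClosed {k h : ℕ} (θ : Set (Fin k × Fin k)) (ρ : Set (Fin h → Fin k)) : Prop :=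
  ρ = rhoTh 0 θ ρ

/-- `γ_σ = {(a_{σ(1)},…,a_{σ(h)}) : a ∈ γ}`. -/
def permuted {k h : ℕ} (σ : Equiv.Perm (Fin h)) (γ : Set (Fin h → Fin k)) :
    Set (Fin h → Fin k) :=
  {w | w ∘ ⇑σ.symm ∈ γ}

/-- A transversal of order `l` for the θ-classes: a system of representatives
(pairwise θ-unrelated, meeting every class) such that every tuple whose
coordinates from position `l` onwards lie in `T` belongs to `ρ`. -/
def IsTransversal {k h : ℕ} (θ : Set (Fin k × Fin k)) (ρ : Set (Fin h → Fin k)) (l : ℕ)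
    (T : Set (Fin k)) : Prop :=
  (∀ u ∈ T, ∀ v ∈ T, u ≠ v → (u, v) ∉ θ) ∧
  (∀ a : Fin k, ∃ u ∈ T, (a, u) ∈ θ) ∧
  (∀ w : Fin h → Fin k, (∀ j : Fin h, l ≤ (j : ℕ) → w j ∈ T) → w ∈ ρ)

/-- `ρ` is weakly θ-closed of order `l` (`1 ≤ l ≤ h-1`). -/
def WeaklyThetaClosed {k h : ℕ} (θ : Set (Fin k × Fin k)) (ρ : Set (Fin h → Fin k))
    (l : ℕ) : Prop :=
  1 ≤ l ∧ l ≤ h - 1 ∧ (∃ T : Set (Fin k), IsTransversal θ ρ (l - 1) T) ∧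
  ρ = ⋂ σ : Equiv.Perm (Fin h), permuted σ (rhoTh l θ ρ)

/-- Type I: `η ⊆ ρ` and every θ-class contains a central element of `ρ`. -/
def TypeI {k h : ℕ} (θ : Set (Fin k × Fin k)) (ρ : Set (Fin h → Fin k)) : Prop :=
  eta h θ ⊆ ρ ∧ ∀ a : Fin k, ∃ c : Fin k, (a, c) ∈ θ ∧ c ∈ center ρ

/-- Type II: `ρ` is θ-closed. -/
def TypeII {k h : ℕ} (θ : Set (Fin k × Fin k)) (ρ : Set (Fin h → Fin k)) : Prop :=
  ThetaClosed θ ρ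

/-- Type III: `ρ` is weakly θ-closed of some order and `η ⊆ ρ`. -/
def TypeIII {k h : ℕ} (θ : Set (Fin k × Fin k)) (ρ : Set (Fin h → Fin k)) : Prop :=
  (∃ l : ℕ, WeaklyThetaClosed θ ρ l) ∧ eta h θ ⊆ ρ

/-- `τ` is a diagonal relation through `θ`. -/
def IsDiagonal {k h : ℕ} (θ : Set (Fin k × Fin k)) (τ : Set (Fin h → Fin k)) : Prop :=
  ∃ (ε₁ : Setoid (Fin h)) (ε₂ : Set (Fin h × Fin h)),
    (∀ p ∈ ε₂, (∀ j, ε₁.r p.1 j → p.1 ≤ j) ∧ (∀ j, ε₁.r p.2 j → p.2 ≤ j)) ∧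
    (∀ i : Fin h, (∀ j, ε₁.r i j → i ≤ j) → (i, i) ∈ ε₂) ∧
    (∀ i j, (i, j) ∈ ε₂ → (j, i) ∈ ε₂) ∧
    (∀ i j l, (i, j) ∈ ε₂ → (j, l) ∈ ε₂ → (i, l) ∈ ε₂) ∧
    τ = {a | (∀ i j, ε₁.r i j → a i = a j) ∧ (∀ i j, (i, j) ∈ ε₂ → (a i, a j) ∈ θ)}

/-- `ρ^l_{0,θ}`: `l`-tuples which can be moved inside their θ-classes so that
every `h`-tuple with all entries among the moved elements lies in `ρ`. -/
def rhoPow {k h : ℕ} (l : ℕ) (θ : Set (Fin k × Fin k)) (ρ : Set (Fin h → Fin k)) :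
    Set (Fin l → Fin k) :=
  {u | ∃ e : Fin l → Fin k, (∀ i, (e i, u i) ∈ θ) ∧
    ∀ w : Fin h → Fin k, (∀ j, ∃ i, w j = e i) → w ∈ ρ}

/-- An `h`-regular family of equivalence relations. -/
def IsHRegFamily {A : Type*} (h : ℕ) {m : ℕ} (T : Fin m → Set (A × A)) : Prop :=
  (∀ i, IsEquivRel (T i)) ∧
  (∀ i, (classesOf (T i)).ncard = h) ∧
  (∀ x : Fin m → A, (⋂ i, {b | (x i, b) ∈ T i}).Nonempty)

/-- The `h`-regular relation determined by the family `T`: tuples whose set of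
components meets at most `h-1` classes of each member of the family. -/
def hRegRel {A : Type*} (h : ℕ) {m : ℕ} (T : Fin m → Set (A × A)) : Set (Fin h → A) :=
  {a | ∀ i : Fin m, {S ∈ classesOf (T i) | ∃ j : Fin h, a j ∈ S}.ncard ≤ h - 1}

/-- `ρ` is an `h`-regular relation: determined by some `h`-regular family. -/
def IsHRegularRel {A : Type*} (h : ℕ) (ρ : Set (Fin h → A)) : Prop :=
  ∃ m : ℕ, 1 ≤ m ∧ ∃ T : Fin m → Set (A × A), IsHRegFamily h T ∧ ρ = hRegRel h T

/-- For incomparable nontrivial equivalence relations `ρ`, `θ` with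
`ρ ∩ θ = Δ` and `ρ ∘ θ ≠ E_k²`, setting `σ = (ρ ∘ θ) ∩ (θ ∘ ρ)`:
`Pol(θ) ∩ Pol(ρ) ⊊ Pol(θ) ∩ Pol(σ) ⊊ Pol(θ)`. -/
theorem stmt7 (k : ℕ) (θ ρ : Set (Fin k × Fin k))
    (hθ : NontrivEquiv θ) (hρ : NontrivEquiv ρ)
    (hinc1 : ¬ ρ ⊆ θ) (hinc2 : ¬ θ ⊆ ρ)
    (hγ : ρ ∩ θ = diag k) (hne : relComp ρ θ ≠ Set.univ) :
    PolB θ ∩ PolB ρ ⊂ PolB θ ∩ PolB (relComp ρ θ ∩ relComp θ ρ) ∧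
      PolB θ ∩ PolB (relComp ρ θ ∩ relComp θ ρ) ⊂ PolB θ := by
  classical
  obtain ⟨⟨θrefl, θsymm, θtrans⟩, -, -⟩ := hθ
  obtain ⟨⟨ρrefl, ρsymm, ρtrans⟩, -, -⟩ := hρ
  obtain ⟨⟨p, q⟩, hpqρ, hpqθ⟩ := Set.not_subset.mp hinc1
  obtain ⟨⟨a0, b0⟩, habθ, habρ⟩ := Set.not_subset.mp hinc2
  obtain ⟨⟨c0, d0⟩, hcd⟩ : ∃ cd, cd ∉ relComp ρ θ := by
    by_contra h
    push_neg at h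
    exact hne (Set.eq_univ_of_forall fun x => h x)
  -- σ notation
  set σ : Set (Fin k × Fin k) := relComp ρ θ ∩ relComp θ ρ with hσ
  -- (p,q) ∈ σ
  have hpqσ : (p, q) ∈ σ :=
    ⟨⟨q, hpqρ, θrefl q⟩, ⟨p, θrefl p, hpqρ⟩⟩
  -- any pair among {a0,b0} is in σ
  have hθσ : θ ⊆ σ := fun ⟨x, y⟩ hxy =>
    ⟨⟨x, ρrefl x, hxy⟩, ⟨y, hxy, ρrefl y⟩⟩
  have hab_pairs : ∀ x y : Fin k, (x = a0 ∨ x = b0) → (y = a0 ∨ y = b0) →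
      (x, y) ∈ σ := by
    rintro x y (rfl | rfl) (rfl | rfl)
    · exact hθσ (θrefl _)
    · exact hθσ habθ
    · exact hθσ (θsymm _ _ habθ)
    · exact hθσ (θrefl _)
  -- the two witness operations
  set f₁ : Ops k :=
    ⟨1, fun x => if (p, x 0) ∈ θ then a0 else if (q, x 0) ∈ θ then b0 else a0⟩
    with hf₁
  set f₂ : Ops k :=
    ⟨1, fun x => if (p, x 0) ∈ θ then c0 else if (q, x 0) ∈ θ then d0 else c0⟩
    with hf₂
  -- both are constant on θ-classes, hence preserve θ
  have const_cls : ∀ (u v : Fin k) (x y : Fin 1 → Fin k), (x 0, y 0) ∈ θ →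
      (if (p, x 0) ∈ θ then u else if (q, x 0) ∈ θ then v else u)
      = (if (p, y 0) ∈ θ then u else if (q, y 0) ∈ θ then v else u) := by
    intro u v x y hxy
    have h1 : ((p, x 0) ∈ θ) = ((p, y 0) ∈ θ) := by
      apply propext
      exact ⟨fun h => θtrans _ _ _ h hxy, fun h => θtrans _ _ _ h (θsymm _ _ hxy)⟩
    have h2 : ((q, x 0) ∈ θ) = ((q, y 0) ∈ θ) := by
      apply propext
      exact ⟨fun h => θtrans _ _ _ h hxy, fun h => θtrans _ _ _ h (θsymm _ _ hxy)⟩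
    simp only [h1, h2]
  have hf₁θ : f₁ ∈ PolB θ := by
    intro x y hxy
    have := const_cls a0 b0 x y (hxy 0)
    simpa [f₁, this] using θrefl _
  have hf₂θ : f₂ ∈ PolB θ := by
    intro x y hxy
    have := const_cls c0 d0 x y (hxy 0)
    simpa [f₂, this] using θrefl _
  -- f₁ preserves σ since its image pairs lie in {a0,b0}²
  have hf₁rng : ∀ x : Fin 1 → Fin k, f₁.2 x = a0 ∨ f₁.2 x = b0 := by
    intro x
    simp only [f₁]
    split
    · exact Or.inl rfl
    · split
      · exact Or.inr rfl
      · exact Or.inl rfl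
  have hf₁σ : f₁ ∈ PolB σ := by
    intro x y _
    exact hab_pairs _ _ (hf₁rng x) (hf₁rng y)
  -- f₁ does not preserve ρ
  have hf₁ρ : f₁ ∉ PolB ρ := by
    intro h
    have := h (fun _ => p) (fun _ => q) (fun _ => hpqρ)
    have e1 : f₁.2 (fun _ => p) = a0 := by simp [f₁, θrefl p]
    have e2 : f₁.2 (fun _ => q) = b0 := by simp [f₁, hpqθ, θrefl q]
    rw [e1, e2] at this
    exact habρ this
  -- f₂ does not preserve σ
  have hf₂σ : f₂ ∉ PolB σ := by
    intro h
    have := h (fun _ => p) (fun _ => q) (fun _ => hpqσ)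
    have e1 : f₂.2 (fun _ => p) = c0 := by simp [f₂, θrefl p]
    have e2 : f₂.2 (fun _ => q) = d0 := by simp [f₂, hpqθ, θrefl q]
    rw [e1, e2] at this
    exact hcd this.1
  -- the inclusion Pol θ ∩ Pol ρ ⊆ Pol θ ∩ Pol σ
  have hsub1 : PolB θ ∩ PolB ρ ⊆ PolB θ ∩ PolB σ := by
    rintro f ⟨hfθ, hfρ⟩
    refine ⟨hfθ, ?_⟩
    intro x y hxy
    constructor
    · have h1 : ∀ i, ∃ c, (x i, c) ∈ ρ ∧ (c, y i) ∈ θ := fun i => (hxy i).1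
      choose c hc1 hc2 using h1
      exact ⟨f.2 c, hfρ x c hc1, hfθ c y hc2⟩
    · have h2 : ∀ i, ∃ c, (x i, c) ∈ θ ∧ (c, y i) ∈ ρ := fun i => (hxy i).2
      choose c hc1 hc2 using h2
      exact ⟨f.2 c, hfθ x c hc1, hfρ c y hc2⟩
  constructor
  · rw [Set.ssubset_iff_subset_ne]
    refine ⟨hsub1, fun h => ?_⟩
    have : f₁ ∈ PolB θ ∩ PolB ρ := h.ge ⟨hf₁θ, hf₁σ⟩
    exact hf₁ρ this.2
  · rw [Set.ssubset_iff_subset_ne]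
    refine ⟨Set.inter_subset_left, fun h => ?_⟩
    have : f₂ ∈ PolB θ ∩ PolB σ := h.ge hf₂θ
    exact hf₂σ this.2
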